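/- arXiv:2011.11793 — 11 statements merged into one kernel-verified Lean document; each statement's English description precedes it below -/
import Mathlib

section
/- A quasi-projective partially ordered set is either connected or an antichain. -/
/-- A poset `L` is quasi-projective if for every poset `T`, every monotone map
`f : L → T` and every surjective monotone map `j : L → T`, there is a monotone
`φ : L → L` with `j ∘ φ = f`. -/
def IsQuasiProjectivePoset (L : Type) [PartialOrder L] : Prop :=
  ∀ (T : Type) (_ : PartialOrder T) (f j : L → T),
    Monotone f → Monotone j → Function.Surjective j →
      ∃ φ : L → L, Monotone φ ∧ j ∘ φ = f

/-- A poset is connected if any two elements are joined by a finite sequence of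
pairwise comparable elements. -/
def PosetConnected (L : Type) [PartialOrder L] : Prop :=
  ∀ a b : L, Relation.ReflTransGen (fun x y => x ≤ y ∨ y ≤ x) a b

/-- A poset is an antichain if no two distinct elements are comparable. -/
def PosetAntichain (L : Type) [PartialOrder L] : Prop :=
  ∀ a b : L, a ≤ b → a = b

theorem quasiProjective_poset_connected_or_antichain (L : Type) [PartialOrder L]
    (h : IsQuasiProjectivePoset L) :
    PosetConnected L ∨ PosetAntichain L := by
  classical
  by_cases hA : PosetAntichain L
  · exact Or.inr hA
  left
  simp only [PosetAntichain, not_forall] at hA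
  obtain ⟨a, b, hab, hne⟩ := hA
  set r : L → L → Prop := fun x y => x ≤ y ∨ y ≤ x with hr
  have hsymm : Symmetric r := fun x y hxy => hxy.symm
  have hsymmR : Symmetric (Relation.ReflTransGen r) :=
    have : Std.Symm r := ⟨hsymm⟩
    fun x y hxy => (Relation.ReflTransGen.symmetric (r := r)).symm x y hxy
  -- connectedness to `a` suffices
  suffices hconn : ∀ x : L, Relation.ReflTransGen r a x by
    intro x y
    exact (hsymmR (hconn x)).trans (hconn y)
  by_contra hw
  push_neg at hw
  obtain ⟨w, hwne⟩ := hw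
  -- j : indicator of the component of a
  set j : L → Bool := fun x => if Relation.ReflTransGen r a x then true else false with hj
  set f : L → Bool := fun x => if b ≤ x then true else false with hf
  have hjmono : Monotone j := by
    intro x y hxy
    by_cases hx : Relation.ReflTransGen r a x
    · have hy : Relation.ReflTransGen r a y := hx.tail (Or.inl hxy)
      simp [hj, hx, hy]
    · simp [hj, hx]
  have hfmono : Monotone f := by
    intro x y hxy
    by_cases hx : b ≤ x
    · have hy : b ≤ y := le_trans hx hxy
      simp [hf, hx, hy]
    · simp [hf, hx]
  have hjsurj : Function.Surjective j := by
    intro c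
    cases c
    · exact ⟨w, by simp [hj, hwne]⟩
    · exact ⟨a, by simp [hj, Relation.ReflTransGen.refl]⟩
  obtain ⟨φ, hφmono, hφcomm⟩ := h Bool inferInstance f j hfmono hjmono hjsurj
  have hfa : f a = false := by
    have : ¬ b ≤ a := fun hba => hne (le_antisymm hab hba)
    simp [hf, this]
  have hfb : f b = true := by simp [hf]
  have hja : j (φ a) = false := by
    have := congrFun hφcomm a
    simpa [hfa] using this
  have hjb : j (φ b) = true := by
    have := congrFun hφcomm b
    simpa [hfb] using this
  have hb' : Relation.ReflTransGen r a (φ b) := by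
    by_contra hcon
    simp [hj, hcon] at hjb
  have ha' : ¬ Relation.ReflTransGen r a (φ a) := by
    intro hcon
    simp [hj, hcon] at hja
  exact ha' (hb'.tail (Or.inr (hφmono hab)))
end

section
/- A partially ordered set is quasi-projective if and only if it is a chain or an antichain. -/
theorem quasiProjective_poset_iff_chain_or_antichain (L : Type) [PartialOrder L] :
    IsQuasiProjectivePoset L ↔
      (∀ a b : L, a ≤ b ∨ b ≤ a) ∨ (∀ a b : L, a ≤ b → a = b) := by
  classical
  constructor
  · intro h
    by_contra hcon
    push_neg at hcon
    obtain ⟨⟨a, b, hab, hba⟩, c, d, hcd, hne⟩ := hcon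
    have hdc : ¬ d ≤ c := fun hdc => hne (le_antisymm hcd hdc)
    -- Apply quasi-projectivity with T := L carrying a coarser partial order
    -- (adding the relations x ≤ a → b ≤ y → x ≤' y), j := id, and f collapsing
    -- the comparable pair c < d onto the incomparable pair a, b.
    have key : ∃ φ : L → L, Monotone φ ∧ (id : L → L) ∘ φ = fun t => if d ≤ t then b else a := by
      refine h L
        { le := fun x y => x ≤ y ∨ (x ≤ a ∧ b ≤ y)
          lt := fun x y => (x ≤ y ∨ (x ≤ a ∧ b ≤ y)) ∧ ¬(y ≤ x ∨ (y ≤ a ∧ b ≤ x))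
          lt_iff_le_not_ge := fun _ _ => Iff.rfl
          le_refl := fun x => Or.inl le_rfl
          le_trans := by
            rintro x y z (hxy | ⟨hxa, hby⟩) (hyz | ⟨hya, hbz⟩)
            · exact Or.inl (hxy.trans hyz)
            · exact Or.inr ⟨hxy.trans hya, hbz⟩
            · exact Or.inr ⟨hxa, hby.trans hyz⟩
            · exact absurd (hby.trans hya) hba
          le_antisymm := by
            rintro x y (hxy | ⟨hxa, hby⟩) (hyx | ⟨hya, hbx⟩)
            · exact le_antisymm hxy hyx
            · exact absurd ((hbx.trans hxy).trans hya) hba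
            · exact absurd ((hby.trans hyx).trans hxa) hba
            · exact absurd (hby.trans hya) hba }
        (fun t => if d ≤ t then b else a) id ?_ ?_ Function.surjective_id
      · intro x y hxy
        show (if d ≤ x then b else a) ≤ (if d ≤ y then b else a) ∨
          ((if d ≤ x then b else a) ≤ a ∧ b ≤ (if d ≤ y then b else a))
        by_cases hdx : d ≤ x
        · rw [if_pos hdx, if_pos (hdx.trans hxy)]
          exact Or.inl le_rfl
        · by_cases hdy : d ≤ y
          · rw [if_neg hdx, if_pos hdy]
            exact Or.inr ⟨le_rfl, le_rfl⟩
          · rw [if_neg hdx, if_neg hdy]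
            exact Or.inl le_rfl
      · intro x y hxy
        exact Or.inl hxy
    obtain ⟨φ, hφ, hcomp⟩ := key
    have hφeq : ∀ t, φ t = if d ≤ t then b else a := fun t => congrFun hcomp t
    have hle : φ c ≤ φ d := hφ hcd
    have h1 : φ c = a := (hφeq c).trans (if_neg hdc)
    have h2 : φ d = b := (hφeq d).trans (if_pos le_rfl)
    rw [h1, h2] at hle
    exact hab hle
  · rintro (hchain | hanti) <;> intro T instT f j hf hj hsurj
    · -- chain case
      refine ⟨fun x => Classical.choose (hsurj (f x)), ?_, ?_⟩
      · intro x y hxy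
        have hx : j (Classical.choose (hsurj (f x))) = f x := Classical.choose_spec (hsurj (f x))
        have hy : j (Classical.choose (hsurj (f y))) = f y := Classical.choose_spec (hsurj (f y))
        show Classical.choose (hsurj (f x)) ≤ Classical.choose (hsurj (f y))
        rcases hchain (Classical.choose (hsurj (f x))) (Classical.choose (hsurj (f y))) with
          hle | hle
        · exact hle
        · have h1 : f y ≤ f x := by
            have := hj hle
            rwa [hx, hy] at this
          have h2 : f x = f y := le_antisymm (hf hxy) h1
          rw [h2]
      · funext x
        exact Classical.choose_spec (hsurj (f x))
    · -- antichain case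
      refine ⟨fun x => Classical.choose (hsurj (f x)), ?_, ?_⟩
      · intro x y hxy
        obtain rfl := hanti x y hxy
        exact le_rfl
      · funext x
        exact Classical.choose_spec (hsurj (f x))
end

section
/- Every chain (linearly ordered set) is a quasi-projective poset. -/
theorem chain_isQuasiProjectivePoset (L : Type) [PartialOrder L]
    (hchain : ∀ a b : L, a ≤ b ∨ b ≤ a) :
    IsQuasiProjectivePoset L := by
  intro T _ f j hf hj hsurj
  choose g hg using hsurj
  refine ⟨fun x => g (f x), ?_, ?_⟩
  · intro x y hxy
    rcases eq_or_lt_of_le (hf hxy) with h | h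
    · show g (f x) ≤ g (f y); rw [h]
    · rcases hchain (g (f x)) (g (f y)) with h' | h'
      · exact h'
      · exfalso
        have := hj h'
        rw [hg, hg] at this
        exact absurd (le_antisymm h.le this) h.ne
  · funext x; exact hg (f x)
end

section
/- If a poset contains three distinct elements u, v, w with u < v, u < w, and v and w incomparable, then it is not quasi-projective. (Dually for v < u, w < u.) -/
open Classical in
lemma key_up (L : Type) [PartialOrder L] (u v w : L)
    (huv : u < v) (huw : u < w) (hvw : ¬ v ≤ w) (hwv : ¬ w ≤ v) :
    ¬ IsQuasiProjectivePoset L := by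
  intro hqp
  have hvu : ¬ v ≤ u := fun h => hvw (h.trans huw.le)
  have hwu : ¬ w ≤ u := fun h => hwv (h.trans huv.le)
  by_cases hz : ∃ z, v ≤ z ∧ w ≤ z
  · -- common upper bound: use the 4-chain
    obtain ⟨z, hvz, hwz⟩ := hz
    set j : L → Fin 4 := fun x => if w ≤ x then (if v ≤ x then 3 else 2)
                                  else (if v ≤ x then 1 else 0) with hj_def
    set f : L → Fin 4 := fun x => if w ≤ x then (if v ≤ x then 3 else 2) else 1 with hf_def
    have hjmono : Monotone j := by
      intro x y hxy
      simp only [hj_def]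
      by_cases hwx : w ≤ x <;> by_cases hvx : v ≤ x <;>
        by_cases hwy : w ≤ y <;> by_cases hvy : v ≤ y <;>
        simp only [hwx, hvx, hwy, hvy, if_true, if_false] <;>
        first
          | exact absurd (hwx.trans hxy) hwy
          | exact absurd (hvx.trans hxy) hvy
          | decide
    have hfmono : Monotone f := by
      intro x y hxy
      simp only [hf_def]
      by_cases hwx : w ≤ x <;> by_cases hvx : v ≤ x <;>
        by_cases hwy : w ≤ y <;> by_cases hvy : v ≤ y <;>
        simp only [hwx, hvx, hwy, hvy, if_true, if_false] <;>
        first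
          | exact absurd (hwx.trans hxy) hwy
          | exact absurd (hvx.trans hxy) hvy
          | decide
    have hjsurj : Function.Surjective j := by
      intro t
      fin_cases t
      · exact ⟨u, by simp [hj_def, hvu, hwu]⟩
      · exact ⟨v, by simp [hj_def, hwv]⟩
      · exact ⟨w, by simp [hj_def, hvw]⟩
      · exact ⟨z, by simp [hj_def, hvz, hwz]⟩
    obtain ⟨φ, hφ, hcomp⟩ := hqp (Fin 4) inferInstance f j hfmono hjmono hjsurj
    have hu : j (φ u) = f u := congrFun hcomp u
    have hw : j (φ w) = f w := congrFun hcomp w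
    have hfu : f u = 1 := by simp [hf_def, hwu]
    have hfw : f w = 2 := by simp [hf_def, hvw]
    rw [hfu] at hu; rw [hfw] at hw
    -- from hu: v ≤ φ u ∧ ¬ w ≤ φ u
    have hvφu : v ≤ φ u := by
      by_contra h
      simp only [hj_def, h, if_false] at hu
      split_ifs at hu <;> exact absurd hu (by decide)
    have hvφw : ¬ v ≤ φ w := by
      intro h
      simp only [hj_def, h, if_true] at hw
      split_ifs at hw <;> exact absurd hw (by decide)
    exact hvφw (hvφu.trans (hφ huw.le))
  · -- no common upper bound: use the 3-chain
    set j : L → Fin 3 := fun x => if w ≤ x then 2 else (if v ≤ x then 1 else 0) with hj_def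
    set f : L → Fin 3 := fun x => if v ≤ x then 2 else 1 with hf_def
    have hjmono : Monotone j := by
      intro x y hxy
      simp only [hj_def]
      by_cases hwx : w ≤ x <;> by_cases hvx : v ≤ x <;>
        by_cases hwy : w ≤ y <;> by_cases hvy : v ≤ y <;>
        simp only [hwx, hvx, hwy, hvy, if_true, if_false] <;>
        first
          | exact absurd (hwx.trans hxy) hwy
          | exact absurd (hvx.trans hxy) hvy
          | decide
    have hfmono : Monotone f := by
      intro x y hxy
      simp only [hf_def]
      by_cases hvx : v ≤ x <;> by_cases hvy : v ≤ y <;>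
        simp only [hvx, hvy, if_true, if_false] <;>
        first
          | exact absurd (hvx.trans hxy) hvy
          | decide
    have hjsurj : Function.Surjective j := by
      intro t
      fin_cases t
      · exact ⟨u, by simp [hj_def, hvu, hwu]⟩
      · exact ⟨v, by simp [hj_def, hwv]⟩
      · exact ⟨w, by simp [hj_def]⟩
    obtain ⟨φ, hφ, hcomp⟩ := hqp (Fin 3) inferInstance f j hfmono hjmono hjsurj
    have hu : j (φ u) = f u := congrFun hcomp u
    have hv : j (φ v) = f v := congrFun hcomp v
    have hfu : f u = 1 := by simp [hf_def, hvu]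
    have hfv : f v = 2 := by simp [hf_def]
    rw [hfu] at hu; rw [hfv] at hv
    have hvφu : v ≤ φ u := by
      by_contra h
      simp only [hj_def, h, if_false] at hu
      split_ifs at hu <;> exact absurd hu (by decide)
    have hwφv : w ≤ φ v := by
      by_contra h
      simp only [hj_def, h, if_false] at hv
      split_ifs at hv <;> exact absurd hv (by decide)
    exact hz ⟨φ v, hvφu.trans (hφ huv.le), hwφv⟩

lemma qp_dual {L : Type} [PartialOrder L] (h : IsQuasiProjectivePoset L) :
    IsQuasiProjectivePoset (Lᵒᵈ) := by
  intro T instT f j hf hj hjsurj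
  obtain ⟨φ, hφ, hcomp⟩ := h (Tᵒᵈ) inferInstance
    (fun x => OrderDual.toDual (f (OrderDual.toDual x)))
    (fun x => OrderDual.toDual (j (OrderDual.toDual x)))
    (fun _ _ hxy => hf (a := OrderDual.toDual _) (b := OrderDual.toDual _) hxy)
    (fun _ _ hxy => hj (a := OrderDual.toDual _) (b := OrderDual.toDual _) hxy)
    (fun t => hjsurj t)
  exact ⟨φ, fun _ _ hxy => hφ hxy, funext fun x => congrFun hcomp x⟩

theorem not_quasiProjective_of_fork (L : Type) [PartialOrder L]
    (u v w : L) (huv : u ≠ v) (huw : u ≠ w) (hvw : v ≠ w)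
    (hfork : (u < v ∧ u < w) ∨ (v < u ∧ w < u))
    (hincomp : ¬ v ≤ w ∧ ¬ w ≤ v) :
    ¬ IsQuasiProjectivePoset L := by
  rcases hfork with ⟨h1, h2⟩ | ⟨h1, h2⟩
  · exact key_up L u v w h1 h2 hincomp.1 hincomp.2
  · intro hqp
    exact key_up (Lᵒᵈ) (OrderDual.toDual u) (OrderDual.toDual v) (OrderDual.toDual w)
      h1 h2 hincomp.2 hincomp.1 (qp_dual hqp)
end

section
/- A lattice (viewed as a poset) is quasi-projective if and only if it is a chain. -/
/-- Key lemma: if `L` is quasi-projective and `a`, `b` are incomparable with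
`j b ≤ j a` in the linear extension, we get a contradiction. -/
lemma aux_no_incomparable (L : Type) [Lattice L] (hQP : IsQuasiProjectivePoset L)
    (a b : L) (hab : ¬ a ≤ b) (hba : ¬ b ≤ a)
    (hj : toLinearExtension (α := L) b ≤ toLinearExtension (α := L) a) : False := by
  classical
  set j : L → LinearExtension L := fun x => toLinearExtension x with hjdef
  have hjmono : Monotone j := toLinearExtension.monotone'
  have hjsurj : Function.Surjective j := fun t => ⟨t, rfl⟩
  have hjinj : Function.Injective j := fun x y h => h
  set g : L → L := fun x => if x ≤ b then (if x = b then a else b) else x ⊔ (a ⊔ b)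
    with hgdef
  have key : ∀ x y : L, x ≤ y → g x ≤ g y ∨ (g x = b ∧ g y = a) := by
    intro x y hxy
    by_cases hx : x ≤ b
    · by_cases hy : y ≤ b
      · by_cases hyb : y = b
        · by_cases hxb : x = b
          · left; simp [hgdef, hx, hxb, hy, hyb]
          · right
            constructor
            · simp [hgdef, hx, hxb]
            · simp [hgdef, hy, hyb]
        · have hxb : x ≠ b := by
            rintro rfl
            exact hyb (le_antisymm hy hxy)
          left; simp [hgdef, hx, hy, hxb, hyb]
      · have h1 : a ≤ y ⊔ (a ⊔ b) := le_trans le_sup_left le_sup_right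
        have h2 : b ≤ y ⊔ (a ⊔ b) := le_trans le_sup_right le_sup_right
        left
        by_cases hxb : x = b
        · simpa [hgdef, hx, hxb, hy] using h1
        · simpa [hgdef, hx, hxb, hy] using h2
    · have hy : ¬ y ≤ b := fun h => hx (le_trans hxy h)
      left
      simpa [hgdef, hx, hy] using sup_le_sup_right hxy (a ⊔ b)
  have hfmono : Monotone (j ∘ g) := by
    intro x y hxy
    rcases key x y hxy with h | ⟨h1, h2⟩
    · exact hjmono h
    · show j (g x) ≤ j (g y)
      rw [h1, h2]
      exact hj
  obtain ⟨φ, hφmono, hφ⟩ := hQP (LinearExtension L) inferInstance (j ∘ g) j hfmono hjmono hjsurj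
  have hφg : φ = g := by
    funext x
    exact hjinj (congrFun hφ x)
  subst hφg
  -- Now φ = g is monotone; but g (a ⊓ b) = b and g b = a, with a ⊓ b ≤ b.
  have hmb : a ⊓ b ≤ b := inf_le_right
  have hmne : a ⊓ b ≠ b := by
    intro h
    exact hba (h ▸ inf_le_left)
  have h1 : g (a ⊓ b) = b := by simp [hgdef, hmb, hmne]
  have h2 : g b = a := by simp [hgdef]
  have := hφmono hmb
  rw [h1, h2] at this
  exact hba this

theorem lattice_quasiProjective_iff_chain (L : Type) [Lattice L] :
    IsQuasiProjectivePoset L ↔ ∀ a b : L, a ≤ b ∨ b ≤ a := by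
  constructor
  · intro hQP a b
    by_contra h
    push_neg at h
    obtain ⟨hab, hba⟩ := h
    rcases le_total (toLinearExtension (α := L) b) (toLinearExtension (α := L) a) with hj | hj
    · exact aux_no_incomparable L hQP a b hab hba hj
    · exact aux_no_incomparable L hQP b a hba hab hj
  · intro hchain T _ f j hf hj hjsurj
    classical
    set s : T → L := fun t => (hjsurj t).choose with hsdef
    have hs : ∀ t, j (s t) = t := fun t => (hjsurj t).choose_spec
    refine ⟨s ∘ f, ?_, ?_⟩
    · intro x y hxy
      rcases hchain (s (f x)) (s (f y)) with h | h
      · exact h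
      · have : f y ≤ f x := by
          have := hj h
          rwa [hs, hs] at this
        have : f x = f y := le_antisymm (hf hxy) this
        simp [Function.comp, this]
    · funext x
      simp [Function.comp, hs]
end

section
/- A loopless graph is quasi-projective if and only if it is a complete graph or an empty graph (has no edges). -/
/-- A simple (loopless) graph `G` is quasi-projective if for every graph `H`,
every homomorphism `f : G → H` and every surjective homomorphism `j : G → H`,
there is an endomorphism `φ` of `G` with `j ∘ φ = f`. -/
def SimpleGraph.IsQuasiProjective {V : Type} (G : SimpleGraph V) : Prop :=
  ∀ (W : Type) (H : SimpleGraph W) (f j : G →g H), Function.Surjective j →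
    ∃ φ : G →g G, ∀ v, j (φ v) = f v

theorem simpleGraph_quasiProjective_iff_top_or_bot {V : Type} (G : SimpleGraph V) :
    G.IsQuasiProjective ↔ G = ⊤ ∨ G = ⊥ := by
  constructor
  · intro hQP
    by_contra hc
    push_neg at hc
    obtain ⟨hT, hB⟩ := hc
    have h1 : ∃ u v, u ≠ v ∧ ¬ G.Adj u v := by
      by_contra h
      push_neg at h
      apply hT
      ext x y
      simp only [SimpleGraph.top_adj]
      exact ⟨fun hxy => hxy.ne, fun hxy => h x y hxy⟩
    have h2 : ∃ a b, G.Adj a b := by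
      by_contra h
      push_neg at h
      apply hB
      ext x y
      simp [h x y]
    obtain ⟨u, v, huv, hnadj⟩ := h1
    obtain ⟨a, b, hab⟩ := h2
    classical
    set τ : Equiv.Perm V := Equiv.swap a u with hτ
    have hτa : τ a = u := Equiv.swap_apply_left a u
    have hbu : τ b ≠ u := by
      intro h
      exact hab.ne' (τ.injective (h.trans hτa.symm))
    set σ : Equiv.Perm V := τ.trans (Equiv.swap (τ b) v) with hσ
    have hσa : σ a = u := by
      simp only [hσ, Equiv.trans_apply, hτa]
      exact Equiv.swap_apply_of_ne_of_ne (Ne.symm hbu) huv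
    have hσb : σ b = v := by
      simp [hσ, Equiv.trans_apply]
    let f : G →g (⊤ : SimpleGraph V) := ⟨fun x => σ x, fun h => σ.injective.ne h.ne⟩
    let j : G →g (⊤ : SimpleGraph V) := ⟨id, fun h => h.ne⟩
    obtain ⟨φ, hφ⟩ := hQP V ⊤ f j (fun w => ⟨w, rfl⟩)
    have ha : φ a = u := (hφ a).trans hσa
    have hb : φ b = v := (hφ b).trans hσb
    have := φ.map_rel hab
    rw [ha, hb] at this
    exact hnadj this
  · rintro (rfl | rfl) <;> intro W H f j hj <;> choose s hs using hj
    · refine ⟨⟨fun v => s (f v), ?_⟩, fun v => hs (f v)⟩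
      intro x y hxy
      simp only [SimpleGraph.top_adj] at *
      intro heq
      have : f x = f y := by
        rw [← hs (f x), ← hs (f y), heq]
      exact (H.ne_of_adj (f.map_rel hxy)) this
    · exact ⟨⟨fun v => s (f v), fun h => h.elim⟩, fun v => hs (f v)⟩
end

section
/- A loopless directed graph is quasi-projective if and only if it is a complete digraph or an empty digraph. -/
/-- A loopless digraph `(V, A)` is quasi-projective if for every loopless
digraph `(W, B)`, every homomorphism `f` and every surjective homomorphism `j`
from `(V, A)` to `(W, B)`, there is an endomorphism `φ` with `j ∘ φ = f`. -/
def IsQuasiProjectiveDigraph {V : Type} (A : V → V → Prop) : Prop :=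
  ∀ (W : Type) (B : W → W → Prop), Irreflexive B →
    ∀ f j : V → W, (∀ x y, A x y → B (f x) (f y)) → (∀ x y, A x y → B (j x) (j y)) →
      Function.Surjective j →
        ∃ φ : V → V, (∀ x y, A x y → A (φ x) (φ y)) ∧ j ∘ φ = f

theorem digraph_quasiProjective_iff_complete_or_empty {V : Type}
    (A : V → V → Prop) (hA : Irreflexive A) :
    IsQuasiProjectiveDigraph A ↔
      (∀ x y : V, x ≠ y → A x y) ∨ (∀ x y : V, ¬ A x y) := by
  constructor
  · intro hQP
    by_contra h
    classical
    push_neg at h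
    obtain ⟨⟨a, b, hab, hnab⟩, ⟨c, d, hcd⟩⟩ := h
    have hcd' : c ≠ d := fun h => hA c (h ▸ hcd)
    set σ : V ≃ V := Equiv.swap c a with hσ
    have hσd : σ d ≠ a := by
      intro h
      have : σ d = σ c := by rw [h, hσ]; exact (Equiv.swap_apply_left c a).symm
      exact hcd' (σ.injective this).symm
    set τ : V ≃ V := Equiv.swap (σ d) b with hτ
    set F : V ≃ V := σ.trans τ with hF
    have hFc : F c = a := by
      have h1 : σ c = a := Equiv.swap_apply_left c a
      have h2 : τ a = a := Equiv.swap_apply_of_ne_of_ne (Ne.symm hσd) hab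
      simp [hF, Equiv.trans_apply, h1, h2]
    have hFd : F d = b := by
      rw [hF, Equiv.trans_apply, hτ]
      exact Equiv.swap_apply_left _ _
    obtain ⟨φ, hφ1, hφ2⟩ := hQP V Ne (fun x h => h rfl) (fun x => F x) id
      (fun x y hxy => F.injective.ne (fun h => hA x (h ▸ hxy)))
      (fun x y hxy h => hA x (by simp only [id] at h; exact h ▸ hxy))
      (fun x => ⟨x, rfl⟩)
    have hφeq : φ = fun x => F x := hφ2
    have : A (F c) (F d) := by
      have := hφ1 c d hcd
      rwa [hφeq] at this
    rw [hFc, hFd] at this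
    exact hnab this
  · rintro (hc | he) W B hB f j hf hj hjsurj
    · choose g hg using hjsurj
      refine ⟨fun x => g (f x), ?_, funext fun x => hg (f x)⟩
      intro x y hxy
      apply hc
      intro h
      have hfe : f x = f y := by
        have := congrArg j h
        simpa [hg] using this
      exact hB (f x) (hfe ▸ hf x y hxy)
    · choose g hg using hjsurj
      exact ⟨fun x => g (f x), fun x y h => absurd h (he x y),
        funext fun x => hg (f x)⟩
end

section
/- In a quasi-projective graph with loops allowed that has at least one edge, every vertex has a loop. -/
/-- A graph with loops allowed `(V, E)` (with `E` symmetric) is quasi-projective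
if for every such graph `(W, F)`, every homomorphism `f` and every surjective
homomorphism `j` from `(V, E)` to `(W, F)`, there is an endomorphism `φ` of
`(V, E)` with `j ∘ φ = f`. -/
def IsQuasiProjectiveLoopGraph {V : Type} (E : V → V → Prop) : Prop :=
  ∀ (W : Type) (F : W → W → Prop), Symmetric F →
    ∀ f j : V → W, (∀ x y, E x y → F (f x) (f y)) → (∀ x y, E x y → F (j x) (j y)) →
      Function.Surjective j →
        ∃ φ : V → V, (∀ x y, E x y → E (φ x) (φ y)) ∧ j ∘ φ = f

/-- In a quasi-projective graph with loops allowed that has at least one edge,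
every vertex has a loop. -/
theorem loop_graph_qp_edge_implies_all_loops {V : Type} (E : V → V → Prop)
    (hsymm : Symmetric E) (hqp : IsQuasiProjectiveLoopGraph E)
    (hedge : ∃ a b : V, E a b) :
    ∀ v : V, E v v := by
  intro v
  obtain ⟨a, b, hab⟩ := hedge
  obtain ⟨φ, hφ, hcomp⟩ := hqp V (fun _ _ => True) (fun _ _ _ => trivial)
    (fun _ => v) id (fun _ _ _ => trivial) (fun _ _ _ => trivial)
    Function.surjective_id
  have h1 : φ a = v := congrFun hcomp a
  have h2 : φ b = v := congrFun hcomp b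
  have h := hφ a b hab
  rwa [h1, h2] at h
end

section
/- In a quasi-projective graph with loops allowed having no edges between distinct vertices, if some vertex has a loop then every vertex has a loop. -/
/-- In a quasi-projective graph with loops allowed having no edges between
distinct vertices, if some vertex has a loop then every vertex has a loop. -/
theorem loop_graph_qp_eempty_loops {V : Type} (E : V → V → Prop)
    (hsymm : Symmetric E) (hqp : IsQuasiProjectiveLoopGraph E)
    (heempty : ∀ x y : V, x ≠ y → ¬ E x y)
    (hloop : ∃ v : V, E v v) :
    ∀ v : V, E v v := by
  classical
  obtain ⟨v₀, hv₀⟩ := hloop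
  intro v
  by_cases h : v = v₀
  · rwa [h]
  · obtain ⟨φ, hφ, hj⟩ := hqp V (fun _ _ => True) (fun _ _ _ => trivial)
      id (Equiv.swap v₀ v) (fun _ _ _ => trivial) (fun _ _ _ => trivial)
      (Equiv.swap v₀ v).surjective
    have h1 : Equiv.swap v₀ v (φ v₀) = v₀ := congrFun hj v₀
    have h2 : φ v₀ = v := by
      have := (Equiv.swap v₀ v).injective (a₁ := φ v₀) (a₂ := v) (by simp [h1])
      exact this
    have := hφ v₀ v₀ hv₀
    rwa [h2] at this
end

section
/- A graph with loops allowed is quasi-projective if and only if it is either (a) a complete graph in which every vertex has a loop, or (b) a graph with no edges between distinct vertices in which either no vertex has a loop or every vertex has a loop. -/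
/-- From quasi-projectivity, every function is an endomorphism: apply the
definition with the complete graph structure on `V` itself and `j = id`. -/
lemma allEndo {V : Type} (E : V → V → Prop) (h : IsQuasiProjectiveLoopGraph E)
    (f : V → V) : ∀ x y, E x y → E (f x) (f y) := by
  obtain ⟨φ, hφ, hjφ⟩ := h V (fun _ _ => True) (fun _ _ _ => trivial) f id
    (fun _ _ _ => trivial) (fun _ _ _ => trivial) Function.surjective_id
  have : φ = f := hjφ
  exact this ▸ hφ

/-- A graph with loops allowed is quasi-projective iff it is a complete graph
with all loops, or has no edges between distinct vertices and either no loops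
or all loops. -/
theorem loop_graph_quasiProjective_iff {V : Type} (E : V → V → Prop)
    (hsymm : Symmetric E) :
    IsQuasiProjectiveLoopGraph E ↔
      ((∀ x y : V, E x y) ∨
        ((∀ x y : V, x ≠ y → ¬ E x y) ∧
          ((∀ v : V, ¬ E v v) ∨ (∀ v : V, E v v)))) := by
  constructor
  · intro h
    by_cases hcross : ∃ a b : V, a ≠ b ∧ E a b
    · obtain ⟨a, b, hab, hE⟩ := hcross
      left
      intro x y
      classical
      have := allEndo E h (fun z => if z = a then x else y) a b hE
      simpa [if_neg (Ne.symm hab)] using this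
    · push_neg at hcross
      right
      refine ⟨fun x y hxy hE => hcross x y hxy hE, ?_⟩
      by_cases hloop : ∃ u : V, E u u
      · obtain ⟨u, hu⟩ := hloop
        right
        intro v
        exact allEndo E h (fun _ => v) u u hu
      · push_neg at hloop
        exact Or.inl hloop
  · intro h W F hFsymm f j hf hj hjsurj
    obtain ⟨s, hs⟩ := hjsurj.hasRightInverse
    refine ⟨s ∘ f, ?_, ?_⟩
    · intro x y hxy
      rcases h with hcomp | ⟨hcross, hloops⟩
      · exact hcomp _ _
      · have hxy' : x = y := by
          by_contra hne
          exact hcross x y hne hxy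
        subst hxy'
        rcases hloops with hno | hall
        · exact absurd hxy (hno x)
        · exact hall _
    · funext x
      exact hs (f x)
end

section
/- A finite point-line geometry is quasi-projective if and only if it is one of: (1) a geometry with no lines; (2) a geometry in which every pair of distinct points lies on a (two-point) singular line; (3) a geometry in which every point lies on a line containing all points (so every k points lie on a line for the common line size k = n). -/
/-- `L` is a set of lines of a point-line geometry on `X`: each line has at
least two points and two distinct points lie on at most one common line. -/
def IsPointLineGeometry {X : Type} [Fintype X] [DecidableEq X]
    (L : Finset X → Prop) : Prop :=
  (∀ l, L l → 2 ≤ l.card) ∧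
    (∀ l m, L l → L m → ∀ p q : X, p ≠ q →
      p ∈ l → q ∈ l → p ∈ m → q ∈ m → l = m)

/-- `f` is a homomorphism of point-line geometries: the image of every line is
either a single point or contained in a line of the target. -/
def IsPLGHom {X Y : Type} [Fintype X] [DecidableEq X] [Fintype Y] [DecidableEq Y]
    (L : Finset X → Prop) (K : Finset Y → Prop) (f : X → Y) : Prop :=
  ∀ l, L l → (l.image f).card = 1 ∨ ∃ k, K k ∧ l.image f ⊆ k

/-- A finite point-line geometry is quasi-projective if for every finite
point-line geometry, every homomorphism `f` and every surjective homomorphism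
`j` onto it, there is an endomorphism `φ` with `j ∘ φ = f`. -/
def IsQuasiProjectivePLG {X : Type} [Fintype X] [DecidableEq X]
    (L : Finset X → Prop) : Prop :=
  ∀ (Y : Type) (_ : Fintype Y) (_ : DecidableEq Y) (K : Finset Y → Prop),
    Nonempty Y → IsPointLineGeometry K →
    ∀ f j : X → Y, IsPLGHom L K f → IsPLGHom L K j → Function.Surjective j →
      ∃ φ : X → X, IsPLGHom L L φ ∧ j ∘ φ = f

/-- If the classification on the right-hand side holds, every self-map is an
endomorphism. -/
lemma plg_everyMap_of_rhs {X : Type} [Fintype X] [DecidableEq X]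
    (L : Finset X → Prop) (hL : IsPointLineGeometry L)
    (h : (∀ l, ¬ L l) ∨
        (∀ p q : X, p ≠ q → ∃ l, L l ∧ l.card = 2 ∧ p ∈ l ∧ q ∈ l) ∨
        (∀ p : X, ∃ l, L l ∧ p ∈ l ∧ ∀ q : X, q ∈ l)) :
    ∀ φ : X → X, IsPLGHom L L φ := by
  intro φ l hl
  rcases h with h | h | h
  · exact absurd hl (h l)
  · -- every pair lies on a 2-point line: all lines have exactly two points
    obtain ⟨p, hp, q, hq, hpq⟩ := Finset.one_lt_card.mp (hL.1 l hl)
    obtain ⟨l', hl', hl'2, hpl', hql'⟩ := h p q hpq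
    have hll' : l = l' := hL.2 l l' hl hl' p q hpq hp hq hpl' hql'
    have hlpq : l = {p, q} := by
      refine (Finset.eq_of_subset_of_card_le ?_ ?_).symm
      · intro x hx
        simp only [Finset.mem_insert, Finset.mem_singleton] at hx
        rcases hx with rfl | rfl <;> assumption
      · rw [hll', hl'2, Finset.card_pair hpq]
    by_cases hfe : φ p = φ q
    · left
      rw [hlpq]
      simp [hfe]
    · obtain ⟨k, hk, hk2, hpk, hqk⟩ := h (φ p) (φ q) hfe
      refine Or.inr ⟨k, hk, ?_⟩
      rw [hlpq]
      intro x hx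
      simp only [Finset.image_insert, Finset.image_singleton, Finset.mem_insert,
        Finset.mem_singleton] at hx
      rcases hx with rfl | rfl <;> assumption
  · -- some line contains all points
    obtain ⟨p, _, -⟩ := Finset.one_lt_card.mp (hL.1 l hl)
    obtain ⟨m, hm, _, hmall⟩ := h p
    exact Or.inr ⟨m, hm, fun x _ => hmall x⟩

/-- If every self-map is an endomorphism, the classification holds. -/
lemma plg_rhs_of_everyMap {X : Type} [Fintype X] [DecidableEq X] [Nonempty X]
    (L : Finset X → Prop) (hL : IsPointLineGeometry L)
    (hE : ∀ φ : X → X, IsPLGHom L L φ) :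
    (∀ l, ¬ L l) ∨
      (∀ p q : X, p ≠ q → ∃ l, L l ∧ l.card = 2 ∧ p ∈ l ∧ q ∈ l) ∨
      (∀ p : X, ∃ l, L l ∧ p ∈ l ∧ ∀ q : X, q ∈ l) := by
  classical
  by_cases hnl : ∀ l, ¬ L l
  · exact Or.inl hnl
  push_neg at hnl
  obtain ⟨l₀, hl₀⟩ := hnl
  obtain ⟨a, ha, b, hb, hab⟩ := Finset.one_lt_card.mp (hL.1 l₀ hl₀)
  -- Step 1: every pair of distinct points lies on a common line
  have collinear : ∀ p q : X, p ≠ q → ∃ l, L l ∧ p ∈ l ∧ q ∈ l := by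
    intro p q hpq
    set φ : X → X := fun x => if x = b then q else p with hφ
    have hpmem : p ∈ l₀.image φ := by
      refine Finset.mem_image.mpr ⟨a, ha, ?_⟩
      simp [hφ, hab]
    have hqmem : q ∈ l₀.image φ := by
      refine Finset.mem_image.mpr ⟨b, hb, ?_⟩
      simp [hφ]
    rcases hE φ l₀ hl₀ with h1 | ⟨k, hk, hsub⟩
    · obtain ⟨c, hc⟩ := Finset.card_eq_one.mp h1
      rw [hc, Finset.mem_singleton] at hpmem hqmem
      exact absurd (hpmem.trans hqmem.symm) hpq
    · exact ⟨k, hk, hsub hpmem, hsub hqmem⟩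
  -- take a line of maximal cardinality
  obtain ⟨m, hmmem, hmmax⟩ :=
    Finset.exists_max_image (Finset.univ.filter L) Finset.card
      ⟨l₀, by simp [hl₀]⟩
  have hm : L m := (Finset.mem_filter.mp hmmem).2
  have hmax : ∀ l, L l → l.card ≤ m.card := fun l hl =>
    hmmax l (Finset.mem_filter.mpr ⟨Finset.mem_univ _, hl⟩)
  by_cases hk3 : 3 ≤ m.card
  · -- maximal line has ≥ 3 points: show it is `univ`
    right; right
    -- every subset S with 2 ≤ |S| ≤ |m| is contained in a line
    have S_in_line : ∀ S : Finset X, 2 ≤ S.card → S.card ≤ m.card →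
        ∃ l, L l ∧ S ⊆ l := by
      intro S hS2 hSm
      obtain ⟨m', hm'sub, hm'card⟩ := Finset.exists_subset_card_eq hSm
      have e : {x // x ∈ S} ≃ {x // x ∈ m'} := Finset.equivOfCardEq hm'card.symm
      obtain ⟨s₀, hs₀⟩ := Finset.card_pos.mp (by omega : 0 < S.card)
      set φ : X → X := fun x =>
        if h : ∃ s : {x // x ∈ S}, (e s : X) = x then (h.choose : X) else s₀
        with hφ
      have himg : S ⊆ m.image φ := by
        intro s hs
        refine Finset.mem_image.mpr ⟨(e ⟨s, hs⟩ : X), hm'sub (e ⟨s, hs⟩).2, ?_⟩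
        have hex : ∃ t : {x // x ∈ S}, (e t : X) = (e ⟨s, hs⟩ : X) := ⟨⟨s, hs⟩, rfl⟩
        rw [hφ]
        simp only [dif_pos hex]
        have hspec := hex.choose_spec
        have : hex.choose = ⟨s, hs⟩ := e.injective (Subtype.ext hspec)
        rw [this]
      rcases hE φ m hm with h1 | ⟨k, hk, hsub⟩
      · exfalso
        have := Finset.card_le_card himg
        omega
      · exact ⟨k, hk, himg.trans hsub⟩
    -- m must be all of X
    have hmuniv : m = Finset.univ := by
      rw [Finset.eq_univ_iff_forall]
      by_contra hx
      push_neg at hx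
      obtain ⟨x, hx⟩ := hx
      obtain ⟨y, hy⟩ := Finset.card_pos.mp (by omega : 0 < m.card)
      set S : Finset X := insert x (m.erase y) with hS
      have hxe : x ∉ m.erase y := fun h => hx (Finset.mem_of_mem_erase h)
      have hScard : S.card = m.card := by
        rw [hS, Finset.card_insert_of_notMem hxe, Finset.card_erase_of_mem hy]
        omega
      obtain ⟨l₁, hl₁, hSl₁⟩ := S_in_line S (by omega) (by omega)
      have hl₁S : l₁ = S :=
        (Finset.eq_of_subset_of_card_le hSl₁ (by rw [hScard]; exact hmax l₁ hl₁)).symm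
      -- l₁ and m share two distinct points
      have herase2 : 1 < (m.erase y).card := by
        rw [Finset.card_erase_of_mem hy]; omega
      obtain ⟨u, hu, v, hv, huv⟩ := Finset.one_lt_card.mp herase2
      have hul₁ : u ∈ l₁ := hSl₁ (by rw [hS]; exact Finset.mem_insert_of_mem hu)
      have hvl₁ : v ∈ l₁ := hSl₁ (by rw [hS]; exact Finset.mem_insert_of_mem hv)
      have hl₁m : l₁ = m := hL.2 l₁ m hl₁ hm u v huv hul₁ hvl₁
        (Finset.mem_of_mem_erase hu) (Finset.mem_of_mem_erase hv)
      have : x ∈ m := hl₁m ▸ hSl₁ (by rw [hS]; exact Finset.mem_insert_self x _)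
      exact hx this
    intro p
    exact ⟨m, hm, by rw [hmuniv]; exact Finset.mem_univ p,
      fun q => by rw [hmuniv]; exact Finset.mem_univ q⟩
  · -- all lines have exactly 2 points
    right; left
    intro p q hpq
    obtain ⟨l, hl, hpl, hql⟩ := collinear p q hpq
    have h2 : l.card = 2 := by
      have := hL.1 l hl
      have := hmax l hl
      omega
    exact ⟨l, hl, h2, hpl, hql⟩

/-- A finite point-line geometry is quasi-projective iff it has no lines, or
every pair of distinct points lies on a two-point (singular) line, or every
point lies on a line containing all the points. -/
theorem plg_quasiProjective_iff {X : Type} [Fintype X] [DecidableEq X]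
    [Nonempty X] (L : Finset X → Prop) (hL : IsPointLineGeometry L) :
    IsQuasiProjectivePLG L ↔
      ((∀ l, ¬ L l) ∨
        (∀ p q : X, p ≠ q → ∃ l, L l ∧ l.card = 2 ∧ p ∈ l ∧ q ∈ l) ∨
        (∀ p : X, ∃ l, L l ∧ p ∈ l ∧ ∀ q : X, q ∈ l)) := by
  classical
  constructor
  · intro hQP
    by_cases hnl : ∀ l, ¬ L l
    · exact Or.inl hnl
    push_neg at hnl
    obtain ⟨l₀, hl₀⟩ := hnl
    obtain ⟨a, _, b, _, hab⟩ := Finset.one_lt_card.mp (hL.1 l₀ hl₀)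
    have huniv2 : 2 ≤ (Finset.univ : Finset X).card :=
      Finset.one_lt_card.mpr ⟨a, Finset.mem_univ a, b, Finset.mem_univ b, hab⟩
    -- apply quasi-projectivity to the target with unique line `univ` and j = id
    set K : Finset X → Prop := fun k => k = Finset.univ with hK
    have hKgeom : IsPointLineGeometry K :=
      ⟨fun l hl => hl ▸ huniv2,
        fun l m hl hm _ _ _ _ _ _ _ => hl.trans hm.symm⟩
    have hE : ∀ f : X → X, IsPLGHom L L f := by
      intro f
      have hhom : ∀ g : X → X, IsPLGHom L K g :=
        fun g l _ => Or.inr ⟨Finset.univ, rfl, Finset.subset_univ _⟩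
      obtain ⟨φ, hφ, hcomp⟩ := hQP X ‹Fintype X› ‹DecidableEq X› K
        ⟨Classical.arbitrary X⟩ hKgeom f id (hhom f) (hhom id) Function.surjective_id
      have : φ = f := by
        funext x
        exact congrFun hcomp x
      exact this ▸ hφ
    exact plg_rhs_of_everyMap L hL hE
  · intro h
    intro Y _ _ K _ _ f j _ _ hjsurj
    refine ⟨fun x => (hjsurj (f x)).choose, plg_everyMap_of_rhs L hL h _, ?_⟩
    funext x
    exact (hjsurj (f x)).choose_spec
end
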